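/- Let A ∈ ℝ^{m×n}, b ∈ ℝ^m, c ∈ ℝⁿ, with X = {x : Ax ≤ b} nonempty and with the LP min{cᵀx : Ax ≤ b} having an optimal solution. Let γ > 0, α ∈ (0,1), and F_DR(x) = (1-2α)x + 2α·Π_X(x) - 2αγc be the Douglas–Rachford operator for this LP. Then there exists R > 0 such that dist(x, 𝓕) ≤ R implies dist(x, 𝓕) ≤ (1/(2α))·‖F_DR(x) - x‖, where 𝓕 is the fixed-point set of F_DR; consequently for such x, dist(F_DR(x), 𝓕) ≤ (1 - 2α(1-α))·dist(x, 𝓕). -/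
import Mathlib

open Metric RealInnerProductSpace

/-- Variational inequality for a nearest point of a convex set. -/
lemma dr_var {E : Type*} [NormedAddCommGroup E] [InnerProductSpace ℝ E]
    {X : Set E} (hX : Convex ℝ X) {x p : E} (hp : p ∈ X)
    (hmin : ∀ y ∈ X, ‖x - p‖ ≤ ‖x - y‖) {y : E} (hy : y ∈ X) :
    ⟪x - p, y - p⟫ ≤ 0 := by
  by_contra hcon
  push_neg at hcon
  set s := ⟪x - p, y - p⟫ with hs
  have hyp : y - p ≠ 0 := by
    intro h0
    rw [hs, h0, inner_zero_right] at hcon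
    exact lt_irrefl _ hcon
  have hnorm : 0 < ‖y - p‖ ^ 2 := pow_pos (norm_pos_iff.mpr hyp) 2
  set t := min 1 (s / ‖y - p‖ ^ 2) with ht
  have ht0 : 0 < t := lt_min one_pos (div_pos hcon hnorm)
  have ht1 : t ≤ 1 := min_le_left _ _
  have hz : (1 - t) • p + t • y ∈ X := hX hp hy (by linarith) ht0.le (by ring)
  have hle := hmin _ hz
  have hxz : x - ((1 - t) • p + t • y) = (x - p) - t • (y - p) := by module
  rw [hxz] at hle
  have hsq : ‖x - p‖ ^ 2 ≤ ‖(x - p) - t • (y - p)‖ ^ 2 :=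
    pow_le_pow_left₀ (norm_nonneg _) hle 2
  have hexp : ‖(x - p) - t • (y - p)‖ ^ 2
      = ‖x - p‖ ^ 2 - 2 * ⟪x - p, t • (y - p)⟫ + ‖t • (y - p)‖ ^ 2 :=
    norm_sub_sq_real _ _
  rw [hexp, real_inner_smul_right, norm_smul, Real.norm_eq_abs,
    abs_of_pos ht0] at hsq
  have h2 : 2 * s ≤ t * ‖y - p‖ ^ 2 := by nlinarith
  have h3 : t * ‖y - p‖ ^ 2 ≤ s := by
    have hle' : t ≤ s / ‖y - p‖ ^ 2 := min_le_right _ _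
    have := mul_le_mul_of_nonneg_right hle' hnorm.le
    calc t * ‖y - p‖ ^ 2 ≤ s / ‖y - p‖ ^ 2 * ‖y - p‖ ^ 2 := this
      _ = s := by field_simp
  linarith

/-- Reverse direction: variational inequality implies nearest point. -/
lemma dr_min {E : Type*} [NormedAddCommGroup E] [InnerProductSpace ℝ E]
    {X : Set E} {x p : E} (h : ∀ y ∈ X, ⟪x - p, y - p⟫ ≤ 0)
    {y : E} (hy : y ∈ X) : ‖x - p‖ ≤ ‖x - y‖ := by
  have hxy : x - y = (x - p) - (y - p) := by abel
  have h1 := h y hy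
  have h2 : ‖x - p‖ ^ 2 ≤ ‖x - y‖ ^ 2 := by
    have hexp : ‖(x - p) - (y - p)‖ ^ 2
        = ‖x - p‖ ^ 2 - 2 * ⟪x - p, y - p⟫ + ‖y - p‖ ^ 2 := norm_sub_sq_real _ _
    rw [hxy, hexp]
    nlinarith [sq_nonneg ‖y - p‖]
  exact le_of_pow_le_pow_left₀ two_ne_zero (norm_nonneg _) h2

/-- Firm nonexpansiveness of nearest-point maps. -/
lemma dr_firm {E : Type*} [NormedAddCommGroup E] [InnerProductSpace ℝ E]
    {X : Set E} (hX : Convex ℝ X) {x y px py : E} (hpx : px ∈ X) (hpy : py ∈ X)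
    (hx : ∀ z ∈ X, ‖x - px‖ ≤ ‖x - z‖) (hy : ∀ z ∈ X, ‖y - py‖ ≤ ‖y - z‖) :
    ‖px - py‖ ^ 2 ≤ ⟪x - y, px - py⟫ := by
  have h1 := dr_var hX hpx hx hpy
  have h2 := dr_var hX hpy hy hpx
  have h1' : 0 ≤ ⟪x - px, px - py⟫ := by
    rw [show px - py = -(py - px) by abel, inner_neg_right]; linarith
  have hsum : 0 ≤ ⟪(x - y) - (px - py), px - py⟫ := by
    have hx' : (x - y) - (px - py) = (x - px) - (y - py) := by abel
    rw [hx', inner_sub_left]; linarith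
  rw [inner_sub_left, real_inner_self_eq_norm_sq] at hsum
  linarith

lemma dr_nonexp {E : Type*} [NormedAddCommGroup E] [InnerProductSpace ℝ E]
    {X : Set E} (hX : Convex ℝ X) {x y px py : E} (hpx : px ∈ X) (hpy : py ∈ X)
    (hx : ∀ z ∈ X, ‖x - px‖ ≤ ‖x - z‖) (hy : ∀ z ∈ X, ‖y - py‖ ≤ ‖y - z‖) :
    ‖px - py‖ ≤ ‖x - y‖ := by
  have h := dr_firm hX hpx hpy hx hy
  have hcs : ⟪x - y, px - py⟫ ≤ ‖x - y‖ * ‖px - py‖ := real_inner_le_norm _ _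
  rcases eq_or_ne px py with he | hne
  · simp [he]
  · have hpos : 0 < ‖px - py‖ := norm_pos_iff.mpr (sub_ne_zero.mpr hne)
    nlinarith

lemma dr_uniq {E : Type*} [NormedAddCommGroup E] [InnerProductSpace ℝ E]
    {X : Set E} (hX : Convex ℝ X) {x p q : E} (hp : p ∈ X) (hq : q ∈ X)
    (hpm : ∀ y ∈ X, ‖x - p‖ ≤ ‖x - y‖) (hqm : ∀ y ∈ X, ‖x - q‖ ≤ ‖x - y‖) :
    p = q := by
  have h := dr_firm hX hp hq hpm hqm
  rw [sub_self, inner_zero_left] at h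
  have : ‖p - q‖ = 0 := by nlinarith [norm_nonneg (p - q)]
  have := norm_eq_zero.mp this
  exact sub_eq_zero.mp this

set_option maxHeartbeats 1000000 in
/-- Sharpness of a linear objective over a polyhedron towards its optimal face. -/
lemma dr_sharp {m n : ℕ} (A : Matrix (Fin m) (Fin n) ℝ) (b : Fin m → ℝ)
    (c : EuclideanSpace ℝ (Fin n)) (X : Set (EuclideanSpace ℝ (Fin n)))
    (hX : X = {x | ∀ i, Matrix.toEuclideanLin A x i ≤ b i})
    (Xstar : Set (EuclideanSpace ℝ (Fin n))) (v : ℝ)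
    (hXstar : Xstar = X ∩ {y | ⟪c, y⟫ = v})
    (hvmin : ∀ y ∈ X, v ≤ ⟪c, y⟫)
    (hXsconv : Convex ℝ Xstar) (hXsclosed : IsClosed Xstar) (hXsne : Xstar.Nonempty) :
    ∃ σ > 0, ∀ p ∈ X, σ * infDist p Xstar ≤ ⟪c, p⟫ - v := by
  set L := Matrix.toEuclideanLin A with hLdef
  have hrow : ∀ i : Fin m, ∀ (u w : EuclideanSpace ℝ (Fin n)) (r : ℝ),
      L (u + w) i = L u i + L w i ∧ L (r • u) i = r * L u i := by
    intro i u w r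
    constructor
    · rw [map_add]; rfl
    · rw [map_smul]; rfl
  have hrowlin : ∀ i : Fin m, IsLinearMap ℝ (fun x : EuclideanSpace ℝ (Fin n) => L x i) :=
    fun i => ⟨fun u w => (hrow i u w 0).1, fun r u => (hrow i u u r).2⟩
  have hrowcont : ∀ i : Fin m, Continuous (fun x : EuclideanSpace ℝ (Fin n) => L x i) :=
    fun i => (IsLinearMap.mk' _ (hrowlin i)).continuous_of_finiteDimensional
  have hcinner : Continuous (fun x : EuclideanSpace ℝ (Fin n) => ⟪c, x⟫) :=
    continuous_const.inner continuous_id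
  have hX' : X = {x | ∀ i, L x i ≤ b i} := hX
  -- the cones indexed by active sets
  set KK : Set (Fin m) → Set (EuclideanSpace ℝ (Fin n)) := fun S =>
    {d | (∀ i ∈ S, L d i ≤ 0) ∧
      (∀ w : EuclideanSpace ℝ (Fin n), (∀ i ∈ S, L w i ≤ 0) → ⟪c, w⟫ = 0 → ⟪d, w⟫ ≤ 0) ∧
      0 ≤ ⟪c, d⟫} with hKK
  have hKclosed : ∀ S : Set (Fin m), IsClosed (KK S) := by
    intro S
    have heq : KK S = (⋂ i ∈ S, {d : EuclideanSpace ℝ (Fin n) | L d i ≤ 0}) ∩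
        ((⋂ w ∈ {w : EuclideanSpace ℝ (Fin n) | (∀ i ∈ S, L w i ≤ 0) ∧ ⟪c, w⟫ = 0},
          {d : EuclideanSpace ℝ (Fin n) | ⟪d, w⟫ ≤ 0}) ∩
          {d : EuclideanSpace ℝ (Fin n) | 0 ≤ ⟪c, d⟫}) := by
      ext d
      simp only [hKK, Set.mem_setOf_eq, Set.mem_inter_iff, Set.mem_iInter]
      tauto
    rw [heq]
    exact (isClosed_biInter fun i _ => isClosed_le (hrowcont i) continuous_const).inter
      ((isClosed_biInter fun w _ =>
        isClosed_le (continuous_id.inner continuous_const) continuous_const).inter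
        (isClosed_le continuous_const hcinner))
  set U : Set (EuclideanSpace ℝ (Fin n)) :=
    (⋃ S : Set (Fin m), KK S) ∩ sphere (0:EuclideanSpace ℝ (Fin n)) 1 with hU
  have hUcompact : IsCompact U :=
    (isCompact_sphere _ _).inter_left (isClosed_iUnion_of_finite hKclosed)
  have hsig : ∃ σ > 0, ∀ d ∈ U, σ ≤ ⟪c, d⟫ := by
    rcases U.eq_empty_or_nonempty with hUe | hUne
    · exact ⟨1, one_pos, by rw [hUe]; intro d hd; exact absurd hd (Set.notMem_empty d)⟩
    · obtain ⟨d0, hd0U, hmin⟩ := hUcompact.exists_isMinOn hUne hcinner.continuousOn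
      refine ⟨⟪c, d0⟫, ?_, fun d hd => isMinOn_iff.mp hmin d hd⟩
      obtain ⟨hd0K, hd0s⟩ := hd0U
      obtain ⟨S, hS⟩ := Set.mem_iUnion.mp hd0K
      obtain ⟨hK1, hK2, hK3⟩ := hS
      rcases lt_or_eq_of_le hK3 with h | h
      · exact h
      · exfalso
        have hd00 : ⟪d0, d0⟫ ≤ 0 := hK2 d0 hK1 h.symm
        have hd0z : d0 = 0 := real_inner_self_nonpos.mp hd00
        have : ‖d0‖ = 1 := by
          have := mem_sphere_iff_norm.mp hd0s
          simpa using this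
        rw [hd0z, norm_zero] at this
        exact zero_ne_one this
  obtain ⟨σ, hσ0, hσ⟩ := hsig
  -- nearest points on the optimal face
  have hXsproj : ∀ p : EuclideanSpace ℝ (Fin n), ∃ q' ∈ Xstar,
      infDist p Xstar = ‖p - q'‖ ∧ ∀ y ∈ Xstar, ⟪p - q', y - q'⟫ ≤ 0 := by
    intro p
    obtain ⟨q', hq'mem, hq'd⟩ := hXsclosed.exists_infDist_eq_dist hXsne p
    have hd : infDist p Xstar = ‖p - q'‖ := by rw [hq'd, dist_eq_norm]
    have hmin : ∀ y ∈ Xstar, ‖p - q'‖ ≤ ‖p - y‖ := by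
      intro y hy
      rw [← hd, ← dist_eq_norm]
      exact infDist_le_dist_of_mem hy
    exact ⟨q', hq'mem, hd, fun y hy => dr_var hXsconv hq'mem hmin hy⟩
  -- the sharpness (error bound) lemma
  have hErr : ∀ p ∈ X, σ * infDist p Xstar ≤ ⟪c, p⟫ - v := by
    intro p hp
    have hpv : 0 ≤ ⟪c, p⟫ - v := sub_nonneg.mpr (hvmin p hp)
    obtain ⟨q', hq'mem, hq'd, hq'var⟩ := hXsproj p
    rw [hXstar] at hq'mem
    rcases eq_or_ne p q' with he | hne
    · rw [hq'd, he, sub_self, norm_zero, mul_zero]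
      rw [show (⟪c, q'⟫ : ℝ) = v from hq'mem.2]
      simp
    · set d := p - q' with hd
      have hdpos : 0 < ‖d‖ := norm_pos_iff.mpr (sub_ne_zero.mpr hne)
      set S : Set (Fin m) := {i | L q' i = b i} with hS
      have hq'X : ∀ i, L q' i ≤ b i := by
        have h1 := hq'mem.1; rw [hX'] at h1; exact h1
      have hpX : ∀ i, L p i ≤ b i := by rw [hX'] at hp; exact hp
      have hc1 : ∀ i ∈ S, L d i ≤ 0 := by
        intro i hi
        have hiq : L q' i = b i := hi
        have hsub : L d i = L p i - L q' i := by rw [hd, map_sub]; rfl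
        rw [hsub, hiq]
        have := hpX i; linarith
      have hc2 : ∀ w : EuclideanSpace ℝ (Fin n),
          (∀ i ∈ S, L w i ≤ 0) → ⟪c, w⟫ = 0 → ⟪d, w⟫ ≤ 0 := by
        intro w hw1 hw2
        have hev : ∀ i : Fin m, ∀ᶠ t in nhdsWithin (0:ℝ) (Set.Ioi 0),
            L (q' + t • w) i ≤ b i := by
          intro i
          have heq : ∀ t : ℝ, L (q' + t • w) i = L q' i + t * L w i := by
            intro t
            rw [(hrow i q' (t • w) 0).1, (hrow i w w t).2]
          by_cases hiS : i ∈ S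
          · filter_upwards [self_mem_nhdsWithin] with t ht
            rw [heq]
            have h1 := hw1 i hiS
            have hiq : L q' i = b i := hiS
            have ht' : (0:ℝ) < t := ht
            nlinarith
          · have hlt : L q' i < b i := lt_of_le_of_ne (hq'X i) hiS
            have hcont2 : Continuous fun t : ℝ => L q' i + t * L w i :=
              continuous_const.add (continuous_id.mul continuous_const)
            have htend : Filter.Tendsto (fun t : ℝ => L q' i + t * L w i)
                (nhds 0) (nhds (L q' i)) := by
              have h0 := hcont2.tendsto 0
              simpa using h0
            have hev' := htend.eventually_lt_const hlt
            have hev'' : ∀ᶠ t in nhdsWithin (0:ℝ) (Set.Ioi 0), L q' i + t * L w i < b i :=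
              hev'.filter_mono nhdsWithin_le_nhds
            filter_upwards [hev''] with t ht
            rw [heq]; exact ht.le
        have hevall : ∀ᶠ t in nhdsWithin (0:ℝ) (Set.Ioi 0),
            (∀ i, L (q' + t • w) i ≤ b i) ∧ t ∈ Set.Ioi 0 :=
          (Filter.eventually_all.mpr hev).and self_mem_nhdsWithin
        obtain ⟨t, htX, ht0⟩ := hevall.exists
        have ht0' : (0:ℝ) < t := ht0
        have hmemS : q' + t • w ∈ Xstar := by
          rw [hXstar]
          refine ⟨by rw [hX']; exact htX, ?_⟩
          show ⟪c, q' + t • w⟫ = v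
          rw [inner_add_right, real_inner_smul_right, hw2, hq'mem.2]
          ring
        have hvq := hq'var _ hmemS
        have he2 : (q' + t • w) - q' = t • w := by abel
        rw [he2, real_inner_smul_right] at hvq
        nlinarith
      have hcd : ⟪c, d⟫ = ⟪c, p⟫ - v := by
        rw [hd, inner_sub_right, hq'mem.2]
      have hmemU : (‖d‖⁻¹ • d) ∈ U := by
        rw [hU]
        constructor
        · refine Set.mem_iUnion.mpr ⟨S, ?_⟩
          refine ⟨?_, ?_, ?_⟩
          · intro i hi
            have hsm : L (‖d‖⁻¹ • d) i = ‖d‖⁻¹ * L d i := (hrow i d d _).2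
            rw [hsm]
            exact mul_nonpos_of_nonneg_of_nonpos (inv_nonneg.mpr hdpos.le) (hc1 i hi)
          · intro w hw1 hw2
            rw [real_inner_smul_left]
            exact mul_nonpos_of_nonneg_of_nonpos (inv_nonneg.mpr hdpos.le) (hc2 w hw1 hw2)
          · rw [real_inner_smul_right]
            rw [hcd]
            exact mul_nonneg (inv_nonneg.mpr hdpos.le) hpv
        · rw [mem_sphere_iff_norm, sub_zero, norm_smul, norm_inv, norm_norm]
          field_simp
      have hσd := hσ _ hmemU
      rw [real_inner_smul_right] at hσd
      rw [hq'd]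
      calc σ * ‖p - q'‖ ≤ (‖d‖⁻¹ * ⟪c, d⟫) * ‖d‖ := by
            have := mul_le_mul_of_nonneg_right hσd hdpos.le
            rw [hd] at this ⊢
            exact this
        _ = ⟪c, d⟫ := by field_simp
        _ = ⟪c, p⟫ - v := hcd
  exact ⟨σ, hσ0, hErr⟩

lemma dr_arith {a DD NN FF TT : ℝ} (ha0 : 0 < a) (ha1 : a < 1) (hDD : 0 ≤ DD)
    (hFF : 0 ≤ FF) (hNle : NN ≤ DD) (hNN : 0 ≤ NN) (hTge : 2 * DD ≤ TT)
    (hId : FF ^ 2 = (1 - a) * DD ^ 2 + a * NN ^ 2 - a * (1 - a) * TT ^ 2) :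
    FF ≤ (1 - 2 * a * (1 - a)) * DD := by
  have e1 : NN ^ 2 ≤ DD ^ 2 := pow_le_pow_left₀ hNN hNle 2
  have e2 : (2 * DD) ^ 2 ≤ TT ^ 2 := pow_le_pow_left₀ (by linarith) hTge 2
  have e3 : (0 : ℝ) ≤ a * (1 - a) := mul_nonneg ha0.le (by linarith)
  have e4 : a * NN ^ 2 ≤ a * DD ^ 2 := mul_le_mul_of_nonneg_left e1 ha0.le
  have e5 : a * (1 - a) * (2 * DD) ^ 2 ≤ a * (1 - a) * TT ^ 2 :=
    mul_le_mul_of_nonneg_left e2 e3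
  have h6 : FF ^ 2 ≤ (1 - 4 * a * (1 - a)) * DD ^ 2 := by nlinarith [hId, e4, e5]
  have h7 : FF ^ 2 ≤ ((1 - 2 * a * (1 - a)) * DD) ^ 2 := by
    nlinarith [h6, sq_nonneg (2 * a * (1 - a) * DD)]
  have hk : (0 : ℝ) ≤ 1 - 2 * a * (1 - a) := by nlinarith [sq_nonneg (1 - 2 * a)]
  exact le_of_pow_le_pow_left₀ two_ne_zero (mul_nonneg hk hDD) h7

set_option maxHeartbeats 4000000 in
theorem stmt_15 {m n : ℕ} (A : Matrix (Fin m) (Fin n) ℝ) (b : Fin m → ℝ)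
    (c : EuclideanSpace ℝ (Fin n)) (γ α : ℝ) (hγ : 0 < γ) (hα : α ∈ Set.Ioo (0:ℝ) 1)
    (X : Set (EuclideanSpace ℝ (Fin n)))
    (hX : X = {x | ∀ i, Matrix.toEuclideanLin A x i ≤ b i})
    (hXne : X.Nonempty)
    (hopt : ∃ x ∈ X, ∀ y ∈ X, ⟪c, x⟫ ≤ ⟪c, y⟫)
    (proj : EuclideanSpace ℝ (Fin n) → EuclideanSpace ℝ (Fin n))
    (hproj : ∀ x, proj x ∈ X ∧ ∀ y ∈ X, ‖x - proj x‖ ≤ ‖x - y‖)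
    (F : EuclideanSpace ℝ (Fin n) → EuclideanSpace ℝ (Fin n))
    (hF : ∀ x, F x = (1 - 2 * α) • x + (2 * α) • proj x - (2 * α * γ) • c)
    (𝓕 : Set (EuclideanSpace ℝ (Fin n))) (h𝓕 : 𝓕 = {x | F x = x}) :
    ∃ R > 0, ∀ x, infDist x 𝓕 ≤ R →
      infDist x 𝓕 ≤ (1 / (2 * α)) * ‖F x - x‖ ∧
      infDist (F x) 𝓕 ≤ (1 - 2 * α * (1 - α)) * infDist x 𝓕 := by
  obtain ⟨hα0, hα1⟩ := hα
  have h2α : (0:ℝ) < 2 * α := by linarith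
  -- row functionals as linear maps
  set L := Matrix.toEuclideanLin A with hLdef
  have hrow : ∀ i : Fin m, ∀ (u v : EuclideanSpace ℝ (Fin n)) (r : ℝ),
      L (u + v) i = L u i + L v i ∧ L (r • u) i = r * L u i := by
    intro i u v r
    constructor
    · rw [map_add]; rfl
    · rw [map_smul]; rfl
  have hrowlin : ∀ i : Fin m, IsLinearMap ℝ (fun x : EuclideanSpace ℝ (Fin n) => L x i) :=
    fun i => ⟨fun u v => (hrow i u v 0).1, fun r u => (hrow i u u r).2⟩
  have hrowcont : ∀ i : Fin m, Continuous (fun x : EuclideanSpace ℝ (Fin n) => L x i) := by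
    intro i
    exact (IsLinearMap.mk' _ (hrowlin i)).continuous_of_finiteDimensional
  have hcinner : Continuous (fun x : EuclideanSpace ℝ (Fin n) => ⟪c, x⟫) :=
    continuous_const.inner continuous_id
  -- X convex and closed
  have hXi : X = ⋂ i, {x : EuclideanSpace ℝ (Fin n) | L x i ≤ b i} := by
    rw [hX]; ext x; simp [Set.mem_iInter]
  have hXconv : Convex ℝ X := by
    rw [hXi]; exact convex_iInter fun i => convex_halfSpace_le (hrowlin i) (b i)
  have hXclosed : IsClosed X := by
    rw [hXi]; exact isClosed_iInter fun i => isClosed_le (hrowcont i) continuous_const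
  -- the optimal value and optimal face
  obtain ⟨xs, hxsX, hxsopt⟩ := hopt
  set v := ⟪c, xs⟫ with hvdef
  set Xstar : Set (EuclideanSpace ℝ (Fin n)) := X ∩ {y : EuclideanSpace ℝ (Fin n) | ⟪c, y⟫ = v} with hXstar
  have hXsne : Xstar.Nonempty := ⟨xs, hxsX, rfl⟩
  have hXsconv : Convex ℝ Xstar :=
    hXconv.inter (convex_hyperplane ⟨fun u w => inner_add_right c u w,
      fun r u => real_inner_smul_right c u r⟩ v)
  have hXsclosed : IsClosed Xstar :=
    hXclosed.inter (isClosed_eq hcinner continuous_const)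
  -- projection facts
  have hprojX : ∀ x : EuclideanSpace ℝ (Fin n), proj x ∈ X := fun x => (hproj x).1
  have hvar : ∀ x : EuclideanSpace ℝ (Fin n), ∀ y ∈ X, ⟪x - proj x, y - proj x⟫ ≤ 0 :=
    fun x y hy => dr_var hXconv (hprojX x) (hproj x).2 hy
  have hnonexp : ∀ x y : EuclideanSpace ℝ (Fin n), ‖proj x - proj y‖ ≤ ‖x - y‖ :=
    fun x y => dr_nonexp hXconv (hprojX x) (hprojX y) (hproj x).2 (hproj y).2
  have hfirm : ∀ x y : EuclideanSpace ℝ (Fin n), ‖proj x - proj y‖ ^ 2 ≤ ⟪x - y, proj x - proj y⟫ :=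
    fun x y => dr_firm hXconv (hprojX x) (hprojX y) (hproj x).2 (hproj y).2
  -- F x - x formula
  have hFsub : ∀ x : EuclideanSpace ℝ (Fin n), F x - x = (2 * α) • (proj x - x - γ • c) := by
    intro x; rw [hF x]; module
  -- fixed points project to x + γ c
  have hfix_proj : ∀ z ∈ 𝓕, proj z = z + γ • c := by
    intro z hz
    rw [h𝓕, Set.mem_setOf_eq] at hz
    have h0 : (2 * α) • (proj z - z - γ • c) = 0 := by
      rw [← hFsub z, hz, sub_self]
    rcases smul_eq_zero.mp h0 with h | h
    · exact absurd h (by positivity)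
    · rw [sub_sub] at h; exact sub_eq_zero.mp h
  have hmemXstar : ∀ z ∈ 𝓕, z + γ • c ∈ Xstar := by
    intro z hz
    have hp := hfix_proj z hz
    have hmem : z + γ • c ∈ X := hp ▸ hprojX z
    refine ⟨hmem, ?_⟩
    have hopt' : ∀ y ∈ X, ⟪c, z + γ • c⟫ ≤ ⟪c, y⟫ := by
      intro y hy
      have h1 := hvar z y hy
      rw [hp] at h1
      have he : z - (z + γ • c) = -(γ • c) := by module
      rw [he, inner_neg_left, real_inner_smul_left, inner_sub_right] at h1
      nlinarith
    have h1 := hopt' xs hxsX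
    have h2 := hxsopt _ hmem
    exact le_antisymm h1 h2
  have hfixed_of : ∀ q ∈ Xstar, q - γ • c ∈ 𝓕 := by
    intro q hq
    have hqX : q ∈ X := hq.1
    have hqv : ⟪c, q⟫ = v := hq.2
    have hminq : ∀ y ∈ X, ‖(q - γ • c) - q‖ ≤ ‖(q - γ • c) - y‖ := by
      intro y hy
      refine dr_min (fun y' hy' => ?_) hy
      have he : (q - γ • c) - q = -(γ • c) := by module
      rw [he, inner_neg_left, real_inner_smul_left, inner_sub_right]
      have h2 := hxsopt y' hy'
      nlinarith [hqv]
    have heq : proj (q - γ • c) = q :=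
      dr_uniq hXconv (hprojX _) hqX (hproj _).2 hminq
    rw [h𝓕, Set.mem_setOf_eq]
    have h0 : F (q - γ • c) - (q - γ • c) = 0 := by
      rw [hFsub, heq]; module
    exact sub_eq_zero.mp h0
  have h𝓕eq : 𝓕 = (fun z : EuclideanSpace ℝ (Fin n) => z + γ • c) ⁻¹' Xstar := by
    ext z
    constructor
    · intro hz; exact hmemXstar z hz
    · intro hz
      have := hfixed_of _ hz
      simpa using this
  have h𝓕closed : IsClosed 𝓕 := by
    rw [h𝓕eq]
    exact hXsclosed.preimage (continuous_id.add continuous_const)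
  have h𝓕ne : 𝓕.Nonempty := ⟨xs - γ • c, hfixed_of xs ⟨hxsX, rfl⟩⟩
  obtain ⟨σ, hσ0, hErr⟩ := dr_sharp A b c X hX Xstar v hXstar hxsopt hXsconv hXsclosed hXsne
  have hXsproj : ∀ p : EuclideanSpace ℝ (Fin n), ∃ q' ∈ Xstar,
      infDist p Xstar = ‖p - q'‖ ∧ ∀ y ∈ Xstar, ⟪p - q', y - q'⟫ ≤ 0 := by
    intro p
    obtain ⟨q', hq'mem, hq'd⟩ := hXsclosed.exists_infDist_eq_dist hXsne p
    have hd : infDist p Xstar = ‖p - q'‖ := by rw [hq'd, dist_eq_norm]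
    have hmin : ∀ y ∈ Xstar, ‖p - q'‖ ≤ ‖p - y‖ := by
      intro y hy
      rw [← hd, ← dist_eq_norm]
      exact infDist_le_dist_of_mem hy
    exact ⟨q', hq'mem, hd, fun y hy => dr_var hXsconv hq'mem hmin hy⟩
  refine ⟨γ * σ / 3, by positivity, ?_⟩
  intro x hxR
  obtain ⟨xb, hxbF, hxbd⟩ := h𝓕closed.exists_infDist_eq_dist h𝓕ne x
  have hD : infDist x 𝓕 = ‖x - xb‖ := by rw [hxbd, dist_eq_norm]
  have hDnn : (0:ℝ) ≤ infDist x 𝓕 := infDist_nonneg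
  have hDR : ‖x - xb‖ ≤ γ * σ / 3 := by rw [← hD]; exact hxR
  have hqmem := hmemXstar xb hxbF
  have hpxb : proj xb = xb + γ • c := hfix_proj xb hxbF
  have hpq : ‖proj x - (xb + γ • c)‖ ≤ ‖x - xb‖ := by
    have h := hnonexp x xb
    rw [hpxb] at h
    exact h
  obtain ⟨q', hq'mem, hq'd, hq'var⟩ := hXsproj (proj x)
  have hvarx : ⟪x - proj x, q' - proj x⟫ ≤ 0 := hvar x q' hq'mem.1
  have hsplit : x - proj x = ((xb + γ • c) - proj x) + (x - xb) - γ • c := by module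
  rw [hsplit, inner_sub_left, inner_add_left, real_inner_smul_left] at hvarx
  have hcq' : ⟪c, q' - proj x⟫ = v - ⟪c, proj x⟫ := by
    rw [inner_sub_right, hq'mem.2]
  rw [hcq'] at hvarx
  have hcs1 : -(‖(xb + γ • c) - proj x‖ * ‖q' - proj x‖)
      ≤ ⟪(xb + γ • c) - proj x, q' - proj x⟫ := by
    have h1 := abs_le.mp (abs_real_inner_le_norm ((xb + γ • c) - proj x) (q' - proj x))
    linarith [h1.1]
  have hcs2 : -(‖x - xb‖ * ‖q' - proj x‖) ≤ ⟪x - xb, q' - proj x⟫ := by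
    have h1 := abs_le.mp (abs_real_inner_le_norm (x - xb) (q' - proj x))
    linarith [h1.1]
  have herr := hErr (proj x) (hprojX x)
  rw [hq'd] at herr
  have hnrev : ‖q' - proj x‖ = ‖proj x - q'‖ := norm_sub_rev _ _
  have hnrev2 : ‖(xb + γ • c) - proj x‖ = ‖proj x - (xb + γ • c)‖ := norm_sub_rev _ _
  rw [hnrev, hnrev2] at hcs1
  rw [hnrev] at hcs2
  -- chain of inequalities forcing proj x = q'
  have h1 : γ * (⟪c, proj x⟫ - v) ≤ ‖proj x - (xb + γ • c)‖ * ‖proj x - q'‖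
      + ‖x - xb‖ * ‖proj x - q'‖ := by linarith [hvarx, hcs1, hcs2]
  have h2 : γ * (σ * ‖proj x - q'‖) ≤ γ * (⟪c, proj x⟫ - v) :=
    mul_le_mul_of_nonneg_left herr hγ.le
  have h3 : ‖proj x - (xb + γ • c)‖ * ‖proj x - q'‖ + ‖x - xb‖ * ‖proj x - q'‖
      ≤ 2 * (γ * σ / 3) * ‖proj x - q'‖ := by
    have hnn := norm_nonneg (proj x - q')
    linarith [mul_le_mul_of_nonneg_right hpq hnn, mul_le_mul_of_nonneg_right hDR hnn]
  have hz : ‖proj x - q'‖ = 0 := by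
    by_contra hzz
    have hpos : 0 < ‖proj x - q'‖ := lt_of_le_of_ne (norm_nonneg _) (Ne.symm hzz)
    have h4 : γ * (σ * ‖proj x - q'‖) ≤ 2 * (γ * σ / 3) * ‖proj x - q'‖ := by
      linarith [h1, h2, h3]
    have h5 : 0 < γ * σ := mul_pos hγ hσ0
    linarith [mul_pos h5 hpos, h4]
  have hpq' : proj x = q' := sub_eq_zero.mp (norm_eq_zero.mp hz)
  have hpXs : proj x ∈ Xstar := by rw [hpq']; exact hq'mem
  -- part 1
  have hmemF : proj x - γ • c ∈ 𝓕 := hfixed_of _ hpXs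
  have hle1 : infDist x 𝓕 ≤ ‖x - (proj x - γ • c)‖ := by
    have h : infDist x 𝓕 ≤ dist x (proj x - γ • c) := infDist_le_dist_of_mem hmemF
    rwa [dist_eq_norm] at h
  have hne1 : ‖x - (proj x - γ • c)‖ = ‖proj x - x - γ • c‖ := by
    rw [← norm_neg (proj x - x - γ • c)]
    congr 1
    module
  rw [hne1] at hle1
  have hnF : ‖F x - x‖ = (2 * α) * ‖proj x - x - γ • c‖ := by
    rw [hFsub x, norm_smul, Real.norm_eq_abs, abs_of_pos h2α]
  have part1 : infDist x 𝓕 ≤ 1 / (2 * α) * ‖F x - x‖ := by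
    rw [hnF]
    have he : 1 / (2 * α) * ((2 * α) * ‖proj x - x - γ • c‖) = ‖proj x - x - γ • c‖ := by
      field_simp
    rw [he]
    exact hle1
  refine ⟨part1, ?_⟩
  -- part 2 : contraction
  set Nx : EuclideanSpace ℝ (Fin n) := (2:ℝ) • proj x - x - (2 * γ) • c with hNx
  have hFd : F x - xb = (1 - α) • (x - xb) + α • (Nx - xb) := by
    rw [hF x, hNx]; module
  have hNxb : ‖Nx - xb‖ ≤ ‖x - xb‖ := by
    have hrepr : Nx - xb = (2:ℝ) • (proj x - proj xb) - (x - xb) := by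
      rw [hNx, hpxb]; module
    have h2 := hfirm x xb
    have hn2 : ‖(2:ℝ) • (proj x - proj xb)‖ = 2 * ‖proj x - proj xb‖ := by
      rw [norm_smul]; simp
    have h3 : ‖(2:ℝ) • (proj x - proj xb) - (x - xb)‖ ^ 2 ≤ ‖x - xb‖ ^ 2 := by
      have hexp : ‖(2:ℝ) • (proj x - proj xb) - (x - xb)‖ ^ 2
          = ‖(2:ℝ) • (proj x - proj xb)‖ ^ 2
            - 2 * ⟪(2:ℝ) • (proj x - proj xb), x - xb⟫ + ‖x - xb‖ ^ 2 :=
        norm_sub_sq_real _ _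
      rw [hexp, hn2, real_inner_smul_left]
      have hcomm : ⟪proj x - proj xb, x - xb⟫ = ⟪x - xb, proj x - proj xb⟫ :=
        real_inner_comm _ _
      linarith [h2]
    calc ‖Nx - xb‖ = ‖(2:ℝ) • (proj x - proj xb) - (x - xb)‖ := by rw [hrepr]
      _ ≤ ‖x - xb‖ := le_of_pow_le_pow_left₀ two_ne_zero (norm_nonneg _) h3
  have hexp1 := norm_add_sq_real ((1 - α) • (x - xb)) (α • (Nx - xb))
  have hexp2 := norm_sub_sq_real (x - xb) (Nx - xb)
  have ha : ‖(1 - α) • (x - xb)‖ = (1 - α) * ‖x - xb‖ := by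
    rw [norm_smul, Real.norm_eq_abs, abs_of_pos (by linarith)]
  have hb : ‖α • (Nx - xb)‖ = α * ‖Nx - xb‖ := by
    rw [norm_smul, Real.norm_eq_abs, abs_of_pos hα0]
  have hi : ⟪(1 - α) • (x - xb), α • (Nx - xb)⟫ = (1 - α) * (α * ⟪x - xb, Nx - xb⟫) := by
    rw [real_inner_smul_left, real_inner_smul_right]
  have hIdent : ‖F x - xb‖ ^ 2 = (1 - α) * ‖x - xb‖ ^ 2 + α * ‖Nx - xb‖ ^ 2
      - α * (1 - α) * ‖(x - xb) - (Nx - xb)‖ ^ 2 := by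
    rw [hFd, hexp1, ha, hb, hi]
    linear_combination (α * (1 - α)) * hexp2
  have hxNx : (x - xb) - (Nx - xb) = (-2:ℝ) • (proj x - x - γ • c) := by
    rw [hNx]; module
  have hnxNx : ‖(x - xb) - (Nx - xb)‖ = 2 * ‖proj x - x - γ • c‖ := by
    rw [hxNx, norm_smul]; simp
  have hlow : 2 * infDist x 𝓕 ≤ ‖(x - xb) - (Nx - xb)‖ := by
    rw [hnxNx]; linarith [hle1]
  have hfinal : ‖F x - xb‖ ≤ (1 - 2 * α * (1 - α)) * infDist x 𝓕 := by
    rw [← hD] at hIdent hNxb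
    exact dr_arith hα0 hα1 hDnn (norm_nonneg _) hNxb (norm_nonneg _) hlow hIdent
  have hlast : infDist (F x) 𝓕 ≤ dist (F x) xb := infDist_le_dist_of_mem hxbF
  rw [dist_eq_norm] at hlast
  linarith
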